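/- Assume h-exchangeability of the densities. Then for every symmetric measurable decision rule D : [0,1]^K → {0,1}^K and every 1 ≤ L ≤ K, the average power satisfies Π_L(D) = (L!(K−L)!/L) · ∫_Q Σ_{S ⊆ {1,…,K}, |S| = L} f_S(u) · (Σ_{k ∈ S} D_k(u)) du, where f_S denotes the density under the configuration whose set of false nulls is exactly S, and Q = {u ∈ [0,1]^K : 0 ≤ u_1 ≤ … ≤ u_K ≤ 1}. -/

import Mathlib

open MeasureTheory Finset

noncomputable section

/-- The unit cube `[0,1]^K`. -/
def unitCube (K : ℕ) : Set (Fin K → ℝ) := Set.Icc 0 1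

/-- The "lower corner" set `Q = {u ∈ [0,1]^K : u 1 ≤ u 2 ≤ … ≤ u K}`. -/
def QSet (K : ℕ) : Set (Fin K → ℝ) :=
  {u | Monotone u ∧ ∀ i, 0 ≤ u i ∧ u i ≤ 1}

/-- Symmetry of a decision rule: `σ(D(u)) = D(σ(u))` for every permutation `σ`. -/
def IsSymmRule (K : ℕ) (D : (Fin K → ℝ) → Fin K → ℝ) : Prop :=
  ∀ (σ : Equiv.Perm (Fin K)) (u : Fin K → ℝ), D (u ∘ σ) = (D u) ∘ σ

/-- Weak monotonicity: `u i ≤ u j` implies `D i (u) ≥ D j (u)`. -/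
def IsWeaklyMonotone (K : ℕ) (D : (Fin K → ℝ) → Fin K → ℝ) : Prop :=
  ∀ (u : Fin K → ℝ) (i j : Fin K), u i ≤ u j → D u j ≤ D u i

/-- h-exchangeability: `f_h(u) = f_{σ(h)}(σ(u))`. -/
def Exchangeable (K : ℕ) (f : (Fin K → Bool) → (Fin K → ℝ) → ℝ) : Prop :=
  ∀ (σ : Equiv.Perm (Fin K)) (h : Fin K → Bool) (u : Fin K → ℝ),
    f h u = f (h ∘ σ) (u ∘ σ)

/-- `Π_L(D)`: average power when the first `L` nulls are false. -/
def PiL (K : ℕ) (f : (Fin K → Bool) → (Fin K → ℝ) → ℝ) (L : ℕ)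
    (D : (Fin K → ℝ) → Fin K → ℝ) : ℝ :=
  (1 / (L : ℝ)) *
    ∫ u in unitCube K, (∑ k : Fin K, if (k : ℕ) < L then D u k else 0) *
      f (fun k => decide ((k : ℕ) < L)) u

/-! ### Auxiliary combinatorial lemmas -/

section Counting
variable {α : Type*} [DecidableEq α]

omit [DecidableEq α] in
lemma aux_subtypeCongr_apply {p q : α → Prop} [DecidablePred p] [DecidablePred q]
    (e : { x // p x } ≃ { x // q x }) (f : { x // ¬p x } ≃ { x // ¬q x }) (a : α) :
    Equiv.subtypeCongr e f a = if h : p a then (e ⟨a, h⟩ : α) else (f ⟨a, h⟩ : α) := by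
  by_cases h : p a
  · simp [Equiv.subtypeCongr, Equiv.sumCompl_symm_apply_of_pos h, h]
  · simp [Equiv.subtypeCongr, Equiv.sumCompl_symm_apply_of_neg h, h]

lemma aux_mem_iff_of_image_eq {A B : Finset α} {σ : Equiv.Perm α} (h : A.image σ = B) (a : α) :
    a ∈ A ↔ σ a ∈ B := by
  constructor
  · intro ha; rw [← h]; exact Finset.mem_image_of_mem _ ha
  · intro hb; rw [← h] at hb
    obtain ⟨a', ha', he⟩ := Finset.mem_image.1 hb
    rwa [← σ.injective he]

/-- The fiber of permutations mapping `A` onto `B` is equivalent to pairs of bijections. -/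
def auxFiberEquiv (A B : Finset α) :
    {σ : Equiv.Perm α // A.image σ = B} ≃
      (({x // x ∈ A} ≃ {x // x ∈ B}) × ({x // ¬ x ∈ A} ≃ {x // ¬ x ∈ B})) where
  toFun σ := ⟨Equiv.subtypeEquiv σ.1 (aux_mem_iff_of_image_eq σ.2),
    Equiv.subtypeEquiv σ.1 (fun a => not_iff_not.2 (aux_mem_iff_of_image_eq σ.2 a))⟩
  invFun e := ⟨Equiv.subtypeCongr e.1 e.2, by
    ext b
    simp only [Finset.mem_image]
    constructor
    · rintro ⟨a, ha, rfl⟩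
      rw [aux_subtypeCongr_apply, dif_pos ha]
      exact (e.1 ⟨a, ha⟩).2
    · intro hb
      refine ⟨e.1.symm ⟨b, hb⟩, (e.1.symm ⟨b, hb⟩).2, ?_⟩
      rw [aux_subtypeCongr_apply, dif_pos (e.1.symm ⟨b, hb⟩).2]
      simp⟩
  left_inv σ := by
    ext a
    by_cases ha : a ∈ A
    · simp [aux_subtypeCongr_apply, ha]
    · simp [aux_subtypeCongr_apply, ha]
  right_inv e := by
    refine Prod.ext ?_ ?_
    · ext a
      simp [aux_subtypeCongr_apply, a.2]
    · ext a
      simp [aux_subtypeCongr_apply, a.2]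

lemma aux_card_perm_image_eq [Fintype α] (A B : Finset α) (h : A.card = B.card) :
    (Finset.univ.filter (fun σ : Equiv.Perm α => A.image σ = B)).card
      = A.card.factorial * (Fintype.card α - A.card).factorial := by
  classical
  have h1 : (Finset.univ.filter (fun σ : Equiv.Perm α => A.image σ = B)).card
      = Fintype.card {σ : Equiv.Perm α // A.image σ = B} := by
    rw [Fintype.card_subtype]
  rw [h1, Fintype.card_congr (auxFiberEquiv A B), Fintype.card_prod]
  have e1 : {x // x ∈ A} ≃ {x // x ∈ B} := by
    apply Fintype.equivOfCardEq; simp [h]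
  have e2 : {x // ¬ x ∈ A} ≃ {x // ¬ x ∈ B} := by
    apply Fintype.equivOfCardEq
    rw [Fintype.card_subtype_compl, Fintype.card_subtype_compl]
    simp [h]
  rw [Fintype.card_equiv e1, Fintype.card_equiv e2, Fintype.card_subtype_compl]
  simp

/-- Summing a function of `A.image σ` over all permutations. -/
lemma aux_sum_perm_image [Fintype α] (A : Finset α) (φ : Finset α → ℝ) :
    ∑ σ : Equiv.Perm α, φ (A.image σ)
      = (A.card.factorial * (Fintype.card α - A.card).factorial : ℝ) *
        ∑ S ∈ Finset.univ.powersetCard A.card, φ S := by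
  classical
  rw [← Finset.sum_fiberwise_of_maps_to
    (fun σ _ => Finset.mem_powersetCard.2
      ⟨Finset.subset_univ _, Finset.card_image_of_injective A (σ : Equiv.Perm α).injective⟩)
    (fun σ => φ (A.image σ))]
  rw [Finset.mul_sum]
  refine Finset.sum_congr rfl fun S hS => ?_
  have hcard : A.card = S.card := ((Finset.mem_powersetCard.1 hS).2).symm
  have hcg : ∀ σ ∈ Finset.univ.filter (fun σ : Equiv.Perm α => A.image σ = S),
      φ (A.image σ) = φ S := by
    intro σ hσ
    rw [(Finset.mem_filter.1 hσ).2]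
  rw [Finset.sum_congr rfl hcg, Finset.sum_const, aux_card_perm_image_eq A S hcard,
    nsmul_eq_mul]
  push_cast
  ring

end Counting

/-! ### Auxiliary measure-theoretic lemmas -/

lemma aux_volume_not_injective (K : ℕ) :
    volume {u : Fin K → ℝ | ¬ Function.Injective u} = 0 := by
  have hsub : {u : Fin K → ℝ | ¬ Function.Injective u} ⊆
      ⋃ i, ⋃ j, ⋃ (_ : i ≠ j), {u : Fin K → ℝ | u i = u j} := by
    intro u hu
    simp only [Function.Injective, not_forall] at hu
    obtain ⟨i, j, h, hne⟩ := hu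
    exact Set.mem_iUnion.2 ⟨i, Set.mem_iUnion.2 ⟨j, Set.mem_iUnion.2 ⟨hne, h⟩⟩⟩
  refine measure_mono_null hsub ?_
  refine measure_iUnion_null fun i => measure_iUnion_null fun j =>
    measure_iUnion_null fun hne => ?_
  set φ : (Fin K → ℝ) →ₗ[ℝ] ℝ :=
    (LinearMap.proj i : (Fin K → ℝ) →ₗ[ℝ] ℝ) - (LinearMap.proj j : (Fin K → ℝ) →ₗ[ℝ] ℝ) with hφ
  have hker : {u : Fin K → ℝ | u i = u j} = (LinearMap.ker φ : Set (Fin K → ℝ)) := by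
    ext u
    simp [hφ, sub_eq_zero, LinearMap.mem_ker]
  rw [hker]
  apply Measure.addHaar_submodule
  intro htop
  have h1 : Pi.single i (1:ℝ) ∈ LinearMap.ker φ := htop ▸ Submodule.mem_top
  simp only [LinearMap.mem_ker, hφ, LinearMap.sub_apply, LinearMap.proj_apply] at h1
  rw [Pi.single_eq_same, Pi.single_eq_of_ne (Ne.symm hne)] at h1
  norm_num at h1

lemma aux_existsUnique_sort {K : ℕ} {u : Fin K → ℝ} (hu : Function.Injective u) :
    ∃! σ : Equiv.Perm (Fin K), Monotone (u ∘ σ) := by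
  refine ⟨Tuple.sort u, Tuple.monotone_sort u, fun τ hτ => ?_⟩
  have h := Tuple.unique_monotone hτ (Tuple.monotone_sort u)
  exact Equiv.ext fun i => hu (congrFun h i)

lemma aux_permEquiv_apply {K : ℕ} (σ : Equiv.Perm (Fin K)) (u : Fin K → ℝ) :
    MeasurableEquiv.piCongrLeft (fun _ : Fin K => ℝ) σ u = u ∘ ⇑σ.symm := by
  funext b
  rw [MeasurableEquiv.coe_piCongrLeft]
  conv_lhs => rw [← σ.apply_symm_apply b]
  rw [Equiv.piCongrLeft_apply_apply]
  rfl

lemma aux_mem_unitCube_comp {K : ℕ} (v : Fin K → ℝ) (τ : Equiv.Perm (Fin K)) :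
    v ∘ ⇑τ ∈ unitCube K ↔ v ∈ unitCube K := by
  simp only [unitCube, Set.mem_Icc, Pi.le_def, Function.comp_apply, Pi.zero_apply, Pi.one_apply]
  constructor
  · rintro ⟨h0, h1⟩
    constructor
    · intro i
      have := h0 (τ.symm i); rwa [Equiv.apply_symm_apply] at this
    · intro i
      have := h1 (τ.symm i); rwa [Equiv.apply_symm_apply] at this
  · rintro ⟨h0, h1⟩
    exact ⟨fun i => h0 (τ i), fun i => h1 (τ i)⟩

/-- Under h-exchangeability, for every symmetric 0/1-valued measurable
decision rule `D` and every `1 ≤ L ≤ K`, the average power can be written as a linear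
functional of `D` on the lower corner `Q`:
`Π_L(D) = (L!(K−L)!/L) ∫_Q Σ_{|S|=L} f_S(u) (Σ_{k∈S} D_k(u)) du`. -/
theorem PiL_as_integral_over_Q
    (K L : ℕ) (hL1 : 1 ≤ L) (hL2 : L ≤ K)
    (f : (Fin K → Bool) → (Fin K → ℝ) → ℝ)
    (hfMeas : ∀ h, Measurable (f h)) (hfNonneg : ∀ h u, 0 ≤ f h u)
    (hfInt : ∀ h, IntegrableOn (f h) (unitCube K))
    (hExch : Exchangeable K f)
    (D : (Fin K → ℝ) → Fin K → ℝ)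
    (hDMeas : Measurable D) (hD01 : ∀ u k, D u k = 0 ∨ D u k = 1)
    (hDSymm : IsSymmRule K D) :
    PiL K f L D =
      ((L.factorial : ℝ) * (K - L).factorial / L) *
        ∫ u in QSet K,
          ∑ S ∈ Finset.univ.powersetCard L,
            f (fun k => decide (k ∈ S)) u * ∑ k ∈ S, D u k := by
  classical
  rw [PiL]
  set hB : Fin K → Bool := fun k => decide ((k : ℕ) < L) with hhB
  set g : (Fin K → ℝ) → ℝ :=
    fun u => (∑ k : Fin K, if (k : ℕ) < L then D u k else 0) * f hB u with hg
  set gS : Finset (Fin K) → (Fin K → ℝ) → ℝ :=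
    fun S u => f (fun k => decide (k ∈ S)) u * ∑ k ∈ S, D u k with hgS
  set firstL : Finset (Fin K) := Finset.univ.filter (fun k => (k : ℕ) < L) with hfirstL
  have hmemfirstL : ∀ k : Fin K, k ∈ firstL ↔ (k : ℕ) < L := by
    intro k; simp [hfirstL]
  have hcardfirstL : firstL.card = L := by
    have heq : firstL = Finset.map (Fin.castLEEmb hL2) Finset.univ := by
      ext k
      simp only [hmemfirstL, Finset.mem_map, Finset.mem_univ, true_and]
      constructor
      · intro hk; exact ⟨⟨(k : ℕ), hk⟩, by simp [Fin.castLEEmb, Fin.castLE, Fin.ext_iff]⟩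
      · rintro ⟨i, rfl⟩; simpa using i.2
    rw [heq, Finset.card_map, Finset.card_univ, Fintype.card_fin]
  -- basic measurability
  have hDk : ∀ k : Fin K, Measurable fun u => D u k :=
    fun k => (measurable_pi_apply k).comp hDMeas
  have hDbd : ∀ u k, ‖D u k‖ ≤ 1 := by
    intro u k
    rcases hD01 u k with h | h <;> simp [h]
  have hcube : MeasurableSet (unitCube K) := measurableSet_Icc
  set M : Equiv.Perm (Fin K) → Set (Fin K → ℝ) :=
    fun σ => {u : Fin K → ℝ | Monotone (u ∘ ⇑σ)} with hM
  have hMmeas : ∀ σ, MeasurableSet (M σ) := by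
    intro σ
    have heq : M σ = ⋂ (i : Fin K), ⋂ (j : Fin K), ⋂ (_ : i ≤ j),
        {u : Fin K → ℝ | u (σ i) ≤ u (σ j)} := by
      ext u
      simp only [hM, Set.mem_setOf_eq, Set.mem_iInter, Monotone, Function.comp_apply]
    rw [heq]
    refine MeasurableSet.iInter fun i => MeasurableSet.iInter fun j =>
      MeasurableSet.iInter fun _ => ?_
    exact measurableSet_le (measurable_pi_apply _) (measurable_pi_apply _)
  -- integrability
  have hsumMeas : Measurable fun u => ∑ k : Fin K, if (k : ℕ) < L then D u k else 0 := by
    apply Finset.measurable_sum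
    intro k _
    by_cases h : (k : ℕ) < L
    · simpa [h] using hDk k
    · simp [h]
  have hsumBd : ∀ u, ‖∑ k : Fin K, if (k : ℕ) < L then D u k else 0‖ ≤ K := by
    intro u
    calc ‖∑ k : Fin K, if (k : ℕ) < L then D u k else 0‖
        ≤ ∑ k : Fin K, ‖if (k : ℕ) < L then D u k else 0‖ := norm_sum_le _ _
      _ ≤ ∑ _k : Fin K, 1 := by
          refine Finset.sum_le_sum fun k _ => ?_
          by_cases h : (k : ℕ) < L
          · simpa [h] using hDbd u k
          · simp [h]
      _ = K := by simp
  have hgInt : IntegrableOn g (unitCube K) :=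
    (hfInt hB).bdd_mul hsumMeas.aestronglyMeasurable (ae_of_all _ hsumBd)
  have hgSInt : ∀ S : Finset (Fin K), IntegrableOn (gS S) (unitCube K) := by
    intro S
    have hmeas : Measurable fun u => ∑ k ∈ S, D u k :=
      Finset.measurable_sum _ fun k _ => hDk k
    have hbd : ∀ u, ‖∑ k ∈ S, D u k‖ ≤ K := by
      intro u
      calc ‖∑ k ∈ S, D u k‖ ≤ ∑ k ∈ S, ‖D u k‖ := norm_sum_le _ _
        _ ≤ ∑ _k ∈ S, 1 := Finset.sum_le_sum fun k _ => hDbd u k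
        _ = S.card := by simp
        _ ≤ K := by exact_mod_cast (Finset.card_le_univ S).trans (by simp)
    have hInt' := ((hfInt (fun k => decide (k ∈ S))).bdd_mul hmeas.aestronglyMeasurable (ae_of_all _ hbd))
    apply hInt'.congr
    filter_upwards with u
    simp [hgS, mul_comm]
  -- Q' and QSet
  set Q' : Set (Fin K → ℝ) := {u : Fin K → ℝ | Monotone u} ∩ unitCube K with hQ'
  have hQeq : QSet K = Q' := by
    ext u
    simp only [QSet, hQ', Set.mem_inter_iff, Set.mem_setOf_eq, unitCube, Set.mem_Icc,
      Pi.le_def, Pi.zero_apply, Pi.one_apply]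
    constructor
    · rintro ⟨hm, h⟩; exact ⟨hm, fun i => (h i).1, fun i => (h i).2⟩
    · rintro ⟨hm, h0, h1⟩; exact ⟨hm, fun i => ⟨(h0 i), (h1 i)⟩⟩
  have hQ'meas : MeasurableSet Q' := by
    have hmono : {u : Fin K → ℝ | Monotone u} = M 1 := by
      ext u
      simp [hM]
    rw [hQ', hmono]
    exact (hMmeas 1).inter hcube
  have hQ'Int : ∀ S : Finset (Fin K), IntegrableOn (gS S) Q' :=
    fun S => (hgSInt S).mono_set Set.inter_subset_right
  -- Step B: a.e. decomposition
  have hae_inj : ∀ᵐ u : Fin K → ℝ, Function.Injective u := by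
    rw [ae_iff]
    exact aux_volume_not_injective K
  have haeeq : (unitCube K).indicator g =ᵐ[volume]
      fun u => ∑ σ : Equiv.Perm (Fin K), ((M σ) ∩ unitCube K).indicator g u := by
    filter_upwards [hae_inj] with u hu
    obtain ⟨σ0, hσ0, huniq⟩ := aux_existsUnique_sort hu
    by_cases hc : u ∈ unitCube K
    · rw [Set.indicator_of_mem hc]
      rw [Finset.sum_eq_single σ0]
      · rw [Set.indicator_of_mem (Set.mem_inter (show u ∈ M σ0 from hσ0) hc)]
      · intro τ _ hτ
        apply Set.indicator_of_notMem
        rintro ⟨hm, -⟩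
        exact hτ (huniq τ hm)
      · intro h; exact absurd (Finset.mem_univ σ0) h
    · rw [Set.indicator_of_notMem hc]
      refine (Finset.sum_eq_zero fun τ _ => ?_).symm
      exact Set.indicator_of_notMem (fun h => hc h.2) _
  -- Step E : pointwise identity
  have hptE : ∀ (σ : Equiv.Perm (Fin K)) (v : Fin K → ℝ),
      g (v ∘ ⇑σ.symm) = gS (firstL.image ⇑σ.symm) v := by
    intro σ v
    have hDs : D (v ∘ ⇑σ.symm) = D v ∘ ⇑σ.symm := hDSymm σ.symm v
    have hsum1 : (∑ k : Fin K, if (k : ℕ) < L then D (v ∘ ⇑σ.symm) k else 0)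
        = ∑ k ∈ firstL.image ⇑σ.symm, D v k := by
      rw [hDs]
      rw [Finset.sum_image (fun x _ y _ h => σ.symm.injective h)]
      rw [hfirstL, Finset.sum_filter]
      rfl
    have hfp : f hB (v ∘ ⇑σ.symm) = f (fun k => decide (k ∈ firstL.image ⇑σ.symm)) v := by
      have h1 := hExch σ.symm (fun k => decide (k ∈ firstL.image ⇑σ.symm)) v
      have h2 : (fun k => decide (k ∈ firstL.image ⇑σ.symm)) ∘ ⇑σ.symm = hB := by
        funext k
        simp only [Function.comp_apply, hhB]
        rw [decide_eq_decide]
        constructor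
        · intro hk
          obtain ⟨a, ha, he⟩ := Finset.mem_image.1 hk
          have : a = k := σ.symm.injective he
          rw [this] at ha
          exact (hmemfirstL k).1 ha
        · intro hk
          exact Finset.mem_image_of_mem _ ((hmemfirstL k).2 hk)
      rw [h1, h2]
    rw [hg, hgS]
    simp only
    rw [hsum1, hfp, mul_comm]
  -- Step D : per-permutation change of variables
  have hstepDE : ∀ σ : Equiv.Perm (Fin K),
      ∫ u, ((M σ) ∩ unitCube K).indicator g u
        = ∫ v in Q', gS (firstL.image ⇑σ.symm) v := by
    intro σ
    rw [integral_indicator ((hMmeas σ).inter hcube)]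
    have hmp := volume_measurePreserving_piCongrLeft (fun _ : Fin K => ℝ) σ
    have hemb := (MeasurableEquiv.piCongrLeft (fun _ : Fin K => ℝ) σ).measurableEmbedding
    have himg : (⇑(MeasurableEquiv.piCongrLeft (fun _ : Fin K => ℝ) σ)) '' Q'
        = (M σ) ∩ unitCube K := by
      ext u
      constructor
      · rintro ⟨v, hv, rfl⟩
        obtain ⟨hv1, hv2⟩ := hv
        rw [aux_permEquiv_apply]
        refine Set.mem_inter ?_ ?_
        · have hco : (v ∘ ⇑σ.symm) ∘ ⇑σ = v := by
            funext i; simp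
          show Monotone ((v ∘ ⇑σ.symm) ∘ ⇑σ)
          rw [hco]; exact hv1
        · exact (aux_mem_unitCube_comp v σ.symm).2 hv2
      · rintro ⟨hm, hcu⟩
        refine ⟨u ∘ ⇑σ, Set.mem_inter hm ((aux_mem_unitCube_comp u σ).2 hcu), ?_⟩
        rw [aux_permEquiv_apply]
        funext i; simp
    rw [← himg, hmp.setIntegral_image_emb hemb g Q']
    refine setIntegral_congr_fun hQ'meas fun v _ => ?_
    rw [aux_permEquiv_apply]
    exact hptE σ v
  -- Step F : counting
  have hcount : ∀ v : Fin K → ℝ,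
      ∑ σ : Equiv.Perm (Fin K), gS (firstL.image ⇑σ.symm) v
        = ((L.factorial : ℝ) * (K - L).factorial) *
            ∑ S ∈ Finset.univ.powersetCard L, gS S v := by
    intro v
    have h1 : ∑ σ : Equiv.Perm (Fin K), gS (firstL.image ⇑σ.symm) v
        = ∑ σ : Equiv.Perm (Fin K), gS (firstL.image ⇑σ) v := by
      rw [← Equiv.sum_comp (Equiv.inv (Equiv.Perm (Fin K)))
        (fun σ => gS (firstL.image ⇑σ) v)]
      rfl
    rw [h1, aux_sum_perm_image firstL (fun S => gS S v), hcardfirstL, Fintype.card_fin]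
  -- Assemble
  have key : ∫ u in unitCube K, g u
      = ((L.factorial : ℝ) * (K - L).factorial) *
          ∫ v in Q', ∑ S ∈ Finset.univ.powersetCard L, gS S v := by
    rw [← integral_indicator hcube, integral_congr_ae haeeq]
    rw [integral_finset_sum _ (fun σ _ =>
      (hgInt.mono_set Set.inter_subset_right).integrable_indicator ((hMmeas σ).inter hcube))]
    rw [Finset.sum_congr rfl (fun σ _ => hstepDE σ)]
    rw [← integral_finset_sum Finset.univ (fun (σ : Equiv.Perm (Fin K)) _ =>
      (hgSInt (firstL.image ⇑σ.symm)).mono_set Set.inter_subset_right)]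
    rw [setIntegral_congr_fun hQ'meas (fun v _ => hcount v)]
    rw [integral_const_mul]
  have hfinal : (∫ u in unitCube K,
      (∑ k : Fin K, if (k : ℕ) < L then D u k else 0) * f hB u) = ∫ u in unitCube K, g u := rfl
  rw [hfinal, key, hQeq]
  have hsame : (∫ u in Q', ∑ S ∈ Finset.univ.powersetCard L,
      f (fun k => decide (k ∈ S)) u * ∑ k ∈ S, D u k)
      = ∫ v in Q', ∑ S ∈ Finset.univ.powersetCard L, gS S v := rfl
  rw [hsame]
  ring


end
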